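/- Under the discretized (Galerkin) piezoelectric setting with strictly positive damping parameters α > 0 and β > 0: let t₀ ≥ 0, let f : ℝ → ℝⁿ be continuous and g : ℝ → ℝᵏ be continuously differentiable with f(t) = 0 and g(t) = 0 for all t ≥ t₀, and let (u, φ) solve the discretized piezoelectric system on [0, ∞) with u twice continuously differentiable and φ continuously differentiable. Then as t → ∞: u'(t) → 0, ⟨K u(t), u(t)⟩ → 0, φ(t) → 0, and the energy η(t) := ‖u'(t)‖² + ‖u(t)‖² + ‖φ(t)‖² converges to some nonnegative real limit c. -/

import Mathlib

open MeasureTheory Matrix Set Filter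

namespace PiezoAux

lemma hasDerivAt_coord {m : ℕ} {x : ℝ → Fin m → ℝ} {xd : Fin m → ℝ} {t : ℝ}
    (hx : HasDerivAt x xd t) (i : Fin m) : HasDerivAt (fun s => x s i) (xd i) t :=
  hasDerivAt_pi.1 hx i

lemma hasDerivAt_mulVecFun {m l : ℕ} (B : Matrix (Fin l) (Fin m) ℝ) {x : ℝ → Fin m → ℝ}
    {xd : Fin m → ℝ} {t : ℝ} (hx : HasDerivAt x xd t) :
    HasDerivAt (fun s => B.mulVec (x s)) (B.mulVec xd) t := by
  rw [hasDerivAt_pi]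
  intro i
  simp only [Matrix.mulVec, dotProduct]
  exact HasDerivAt.fun_sum fun j _ => (hasDerivAt_coord hx j).const_mul (B i j)

lemma hasDerivAt_dot {m : ℕ} {x y : ℝ → Fin m → ℝ} {xd yd : Fin m → ℝ} {t : ℝ}
    (hx : HasDerivAt x xd t) (hy : HasDerivAt y yd t) :
    HasDerivAt (fun s => x s ⬝ᵥ y s) (xd ⬝ᵥ y t + x t ⬝ᵥ yd) t := by
  simp only [dotProduct]
  have h : HasDerivAt (fun s => ∑ i, x s i * y s i)
      (∑ i, (xd i * y t i + x t i * yd i)) t :=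
    HasDerivAt.fun_sum fun i _ => (hasDerivAt_coord hx i).mul (hasDerivAt_coord hy i)
  simpa [Finset.sum_add_distrib] using h

lemma dot_symm {m : ℕ} {B : Matrix (Fin m) (Fin m) ℝ} (hB : B.IsHermitian) (x y : Fin m → ℝ) :
    x ⬝ᵥ B.mulVec y = B.mulVec x ⬝ᵥ y := by
  rw [Matrix.dotProduct_mulVec, ← Matrix.mulVec_transpose]
  congr 1
  rw [← Matrix.conjTranspose_eq_transpose_of_trivial, hB.eq]

lemma psd_nonneg {m : ℕ} {B : Matrix (Fin m) (Fin m) ℝ} (hB : B.PosSemidef) (x : Fin m → ℝ) :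
    0 ≤ x ⬝ᵥ B.mulVec x := by
  simpa using hB.dotProduct_mulVec_nonneg x

lemma dot_self_nonneg' {m : ℕ} (x : Fin m → ℝ) : (0:ℝ) ≤ x ⬝ᵥ x :=
  Finset.sum_nonneg fun r _ => mul_self_nonneg (x r)

lemma psd_cauchy {m : ℕ} {B : Matrix (Fin m) (Fin m) ℝ} (hB : B.PosSemidef) (x y : Fin m → ℝ) :
    (x ⬝ᵥ B.mulVec y) ^ 2 ≤ (x ⬝ᵥ B.mulVec x) * (y ⬝ᵥ B.mulVec y) := by
  have key : ∀ s : ℝ, 0 ≤ (y ⬝ᵥ B.mulVec y) * (s * s) + (2 * (x ⬝ᵥ B.mulVec y)) * s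
      + (x ⬝ᵥ B.mulVec x) := by
    intro s
    have h0 := psd_nonneg hB (x + s • y)
    have hyx : y ⬝ᵥ B.mulVec x = x ⬝ᵥ B.mulVec y := by
      rw [dot_symm hB.1 x y, dotProduct_comm]
    simp only [Matrix.mulVec_add, Matrix.mulVec_smul, dotProduct_add,
      add_dotProduct, smul_dotProduct, dotProduct_smul,
      smul_eq_mul] at h0
    rw [hyx] at h0
    nlinarith [h0]
  have hd := discrim_le_zero key
  rw [discrim] at hd
  nlinarith [hd]

lemma quad_bound {m : ℕ} (B : Matrix (Fin m) (Fin m) ℝ) :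
    ∃ Cb > 0, ∀ x : Fin m → ℝ, x ⬝ᵥ B.mulVec x ≤ Cb * (x ⬝ᵥ x) := by
  refine ⟨(∑ i, ∑ j, |B i j|) + 1, by positivity, fun x => ?_⟩
  have h1 : x ⬝ᵥ B.mulVec x = ∑ i, ∑ j, x i * B i j * x j := by
    simp only [dotProduct, Matrix.mulVec, Finset.mul_sum]
    exact Finset.sum_congr rfl fun i _ => Finset.sum_congr rfl fun j _ => by ring
  have h2 : ∀ i j : Fin m, x i * B i j * x j ≤ |B i j| * (x ⬝ᵥ x) := by
    intro i j
    have hxi : x i ^ 2 ≤ x ⬝ᵥ x := by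
      have h3 : x ⬝ᵥ x = ∑ r, x r ^ 2 := by
        simp [dotProduct, pow_two]
      rw [h3]
      exact Finset.single_le_sum (fun r _ => sq_nonneg (x r)) (Finset.mem_univ i)
    have hxj : x j ^ 2 ≤ x ⬝ᵥ x := by
      have h3 : x ⬝ᵥ x = ∑ r, x r ^ 2 := by
        simp [dotProduct, pow_two]
      rw [h3]
      exact Finset.single_le_sum (fun r _ => sq_nonneg (x r)) (Finset.mem_univ j)
    calc x i * B i j * x j ≤ |x i * B i j * x j| := le_abs_self _
      _ = |B i j| * (|x i| * |x j|) := by rw [abs_mul, abs_mul]; ring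
      _ ≤ |B i j| * (x ⬝ᵥ x) := by
          apply mul_le_mul_of_nonneg_left _ (abs_nonneg _)
          nlinarith [sq_abs (x i), sq_abs (x j), abs_nonneg (x i), abs_nonneg (x j)]
  calc x ⬝ᵥ B.mulVec x = ∑ i, ∑ j, x i * B i j * x j := h1
    _ ≤ ∑ i, ∑ j, |B i j| * (x ⬝ᵥ x) :=
        Finset.sum_le_sum fun i _ => Finset.sum_le_sum fun j _ => h2 i j
    _ = (∑ i, ∑ j, |B i j|) * (x ⬝ᵥ x) := by rw [Finset.sum_mul]; simp [Finset.sum_mul]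
    _ ≤ ((∑ i, ∑ j, |B i j|) + 1) * (x ⬝ᵥ x) := by
        have h4 : (0:ℝ) ≤ x ⬝ᵥ x := dot_self_nonneg' x
        nlinarith

lemma psd_quad_zero {m : ℕ} {B : Matrix (Fin m) (Fin m) ℝ} (hB : B.PosSemidef) {x : Fin m → ℝ}
    (h : x ⬝ᵥ B.mulVec x = 0) : B.mulVec x = 0 := by
  set w := B.mulVec x with hw
  have hcs := psd_cauchy hB w x
  rw [h, mul_zero] at hcs
  have h1 : w ⬝ᵥ B.mulVec x = 0 := by nlinarith [sq_nonneg (w ⬝ᵥ B.mulVec x)]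
  rw [← hw] at h1
  exact dotProduct_self_eq_zero.1 h1

lemma posdef_coercive {m : ℕ} {B : Matrix (Fin m) (Fin m) ℝ} (hB : B.PosDef) :
    ∃ c > 0, ∀ x : Fin m → ℝ, c * (x ⬝ᵥ x) ≤ x ⬝ᵥ B.mulVec x := by
  obtain ⟨Cb, hCb, hCbb⟩ := quad_bound B⁻¹
  refine ⟨1 / Cb, by positivity, fun x => ?_⟩
  have hdet : IsUnit B.det := isUnit_iff_ne_zero.2 hB.det_pos.ne'
  have hinv : B.mulVec (B⁻¹.mulVec x) = x := by
    rw [Matrix.mulVec_mulVec, Matrix.mul_nonsing_inv _ hdet, Matrix.one_mulVec]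
  have hcs := psd_cauchy hB.posSemidef x (B⁻¹.mulVec x)
  rw [hinv, dotProduct_comm (B⁻¹.mulVec x) x] at hcs
  have h3 : x ⬝ᵥ B⁻¹.mulVec x ≤ Cb * (x ⬝ᵥ x) := hCbb x
  rcases eq_or_lt_of_le (dot_self_nonneg' x) with h4 | h4
  · have h5 : x = 0 := dotProduct_self_eq_zero.1 h4.symm
    simp [h5]
  · have h5 : 0 ≤ x ⬝ᵥ B.mulVec x := psd_nonneg hB.posSemidef x
    rw [div_mul_eq_mul_div, div_le_iff₀ hCb]
    nlinarith

lemma antitoneOn_of_hasDerivAt' {f f' : ℝ → ℝ} {t₀ : ℝ}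
    (hf : ∀ t ∈ Ici t₀, HasDerivAt f (f' t) t) (h0 : ∀ t ∈ Ici t₀, f' t ≤ 0) :
    AntitoneOn f (Ici t₀) := by
  apply antitoneOn_of_deriv_nonpos (convex_Ici t₀)
  · exact fun t ht => (hf t ht).continuousAt.continuousWithinAt
  · intro t ht
    rw [interior_Ici] at ht
    exact ((hf t (mem_Ici.2 (le_of_lt (mem_Ioi.1 ht)))).differentiableAt).differentiableWithinAt
  · intro t ht
    rw [interior_Ici] at ht
    rw [(hf t (mem_Ici.2 (le_of_lt (mem_Ioi.1 ht)))).deriv]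
    exact h0 t (mem_Ici.2 (le_of_lt (mem_Ioi.1 ht)))

lemma monotoneOn_of_hasDerivAt' {f f' : ℝ → ℝ} {t₀ : ℝ}
    (hf : ∀ t ∈ Ici t₀, HasDerivAt f (f' t) t) (h0 : ∀ t ∈ Ici t₀, 0 ≤ f' t) :
    MonotoneOn f (Ici t₀) := by
  apply monotoneOn_of_deriv_nonneg (convex_Ici t₀)
  · exact fun t ht => (hf t ht).continuousAt.continuousWithinAt
  · intro t ht
    rw [interior_Ici] at ht
    exact ((hf t (mem_Ici.2 (le_of_lt (mem_Ioi.1 ht)))).differentiableAt).differentiableWithinAt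
  · intro t ht
    rw [interior_Ici] at ht
    rw [(hf t (mem_Ici.2 (le_of_lt (mem_Ioi.1 ht)))).deriv]
    exact h0 t (mem_Ici.2 (le_of_lt (mem_Ioi.1 ht)))

lemma constOn_of_hasDerivAt_zero {f f' : ℝ → ℝ} {t₀ : ℝ}
    (hf : ∀ t ∈ Ici t₀, HasDerivAt f (f' t) t) (h0 : ∀ t ∈ Ici t₀, f' t = 0) :
    ∀ t ∈ Ici t₀, f t = f t₀ := by
  have h1 := antitoneOn_of_hasDerivAt' hf (fun t ht => le_of_eq (h0 t ht))
  have h2 := monotoneOn_of_hasDerivAt' hf (fun t ht => ge_of_eq (h0 t ht))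
  intro t ht
  have hm : t₀ ∈ Ici t₀ := self_mem_Ici
  exact le_antisymm (h1 hm ht ht) (h2 hm ht ht)

lemma tendsto_of_antitoneOn {f : ℝ → ℝ} {t₀ : ℝ} (hf : AntitoneOn f (Ici t₀))
    (h0 : ∀ t ∈ Ici t₀, 0 ≤ f t) :
    ∃ L, 0 ≤ L ∧ (∀ t ∈ Ici t₀, L ≤ f t) ∧ Tendsto f atTop (nhds L) := by
  set S := f '' Ici t₀ with hS
  have hne : S.Nonempty := ⟨f t₀, ⟨t₀, self_mem_Ici, rfl⟩⟩
  have hbdd : BddBelow S := ⟨0, fun x ⟨t, ht, hx⟩ => hx ▸ h0 t ht⟩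
  set L := sInf S with hL
  have hLle : ∀ t ∈ Ici t₀, L ≤ f t := fun t ht => csInf_le hbdd ⟨t, ht, rfl⟩
  have hL0 : 0 ≤ L := le_csInf hne fun x ⟨t, ht, hx⟩ => hx ▸ h0 t ht
  refine ⟨L, hL0, hLle, ?_⟩
  rw [tendsto_order]
  constructor
  · intro b hb
    filter_upwards [eventually_ge_atTop t₀] with t ht
    exact lt_of_lt_of_le hb (hLle t ht)
  · intro b hb
    obtain ⟨x, ⟨s, hs, hx⟩, hxb⟩ := exists_lt_of_csInf_lt hne hb
    filter_upwards [eventually_ge_atTop s] with t ht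
    calc f t ≤ f s := hf hs (le_trans hs ht) ht
      _ < b := hx ▸ hxb

lemma tendsto_dot {m : ℕ} {α : Type*} {lf : Filter α} {x y : α → Fin m → ℝ} {p q : Fin m → ℝ}
    (hx : Tendsto x lf (nhds p)) (hy : Tendsto y lf (nhds q)) :
    Tendsto (fun t => x t ⬝ᵥ y t) lf (nhds (p ⬝ᵥ q)) := by
  have hx' := tendsto_pi_nhds.1 hx
  have hy' := tendsto_pi_nhds.1 hy
  simp only [dotProduct]
  exact tendsto_finset_sum _ fun i _ => (hx' i).mul (hy' i)

lemma tendsto_mulVecFun {α : Type*} {lf : Filter α} {m l : ℕ} (B : Matrix (Fin l) (Fin m) ℝ)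
    {x : α → Fin m → ℝ} {p : Fin m → ℝ} (hx : Tendsto x lf (nhds p)) :
    Tendsto (fun t => B.mulVec (x t)) lf (nhds (B.mulVec p)) := by
  rw [tendsto_pi_nhds]
  intro i
  have hx' := tendsto_pi_nhds.1 hx
  simp only [Matrix.mulVec, dotProduct]
  exact tendsto_finset_sum _ fun j _ => (hx' j).const_mul (B i j)

lemma tendsto_sq_zero {α : Type*} {lf : Filter α} {x : α → ℝ}
    (h : Tendsto (fun t => (x t) ^ 2) lf (nhds 0)) : Tendsto x lf (nhds 0) := by
  have habs : Tendsto (fun t => |x t|) lf (nhds 0) := by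
    have h3 := h.sqrt
    simpa [Real.sqrt_sq_eq_abs] using h3
  simpa using tendsto_zero_iff_abs_tendsto_zero _ |>.2 habs

lemma tendsto_zero_of_dot_self {m : ℕ} {α : Type*} {lf : Filter α} {x : α → Fin m → ℝ}
    (h : Tendsto (fun t => x t ⬝ᵥ x t) lf (nhds 0)) : Tendsto x lf (nhds 0) := by
  rw [tendsto_pi_nhds]
  intro i
  apply tendsto_sq_zero
  have hb : ∀ t, (x t i) ^ 2 ≤ x t ⬝ᵥ x t := by
    intro t
    have h2 : x t ⬝ᵥ x t = ∑ r, x t r ^ 2 := by simp [dotProduct, pow_two]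
    rw [h2]
    exact Finset.single_le_sum (fun r _ => sq_nonneg (x t r)) (Finset.mem_univ i)
  exact squeeze_zero (fun t => sq_nonneg (x t i)) hb h

lemma eigen_orthonormal {n : ℕ} {B : Matrix (Fin n) (Fin n) ℝ} (hB : B.IsHermitian)
    (i j : Fin n) :
    ⇑(hB.eigenvectorBasis i) ⬝ᵥ ⇑(hB.eigenvectorBasis j) = if i = j then 1 else 0 := by
  have horth := hB.eigenvectorBasis.orthonormal
  rw [orthonormal_iff_ite] at horth
  have h2 := horth i j
  rw [PiLp.inner_apply] at h2
  rw [← h2]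
  simp [dotProduct, RCLike.inner_apply, conj_trivial, mul_comm]

lemma eigen_expansion {n : ℕ} {B : Matrix (Fin n) (Fin n) ℝ} (hB : B.IsHermitian)
    (x : Fin n → ℝ) :
    x = ∑ i, (⇑(hB.eigenvectorBasis i) ⬝ᵥ x) • ⇑(hB.eigenvectorBasis i) := by
  have h := hB.eigenvectorBasis.sum_repr' (WithLp.toLp 2 x : EuclideanSpace ℝ (Fin n))
  have h4 : ∀ i, (inner ℝ (hB.eigenvectorBasis i) (WithLp.toLp 2 x : EuclideanSpace ℝ (Fin n)) : ℝ)
      = ⇑(hB.eigenvectorBasis i) ⬝ᵥ x := by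
    intro i
    rw [PiLp.inner_apply]
    simp [RCLike.inner_apply, conj_trivial, dotProduct, mul_comm]
  funext j
  have hj : (∑ i, (inner ℝ (hB.eigenvectorBasis i) (WithLp.toLp 2 x : EuclideanSpace ℝ (Fin n)) : ℝ)
      • (hB.eigenvectorBasis i : EuclideanSpace ℝ (Fin n))) j = x j := congrArg (fun w => w j) h
  rw [← hj, WithLp.ofLp_sum, Finset.sum_apply, Finset.sum_apply]
  exact Finset.sum_congr rfl fun i _ => by rw [h4]; rfl

lemma dval_E {n : ℕ} {M K Ke : Matrix (Fin n) (Fin n) ℝ} (hM : M.IsHermitian)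
    (hKe : Ke.IsHermitian) {α β : ℝ} {U V W : Fin n → ℝ}
    (heq : M.mulVec W = -(α • M.mulVec V + β • K.mulVec V + Ke.mulVec U)) :
    (W ⬝ᵥ M.mulVec V + V ⬝ᵥ M.mulVec W) + (V ⬝ᵥ Ke.mulVec U + U ⬝ᵥ Ke.mulVec V)
      = -2*α*(V ⬝ᵥ M.mulVec V) - 2*β*(V ⬝ᵥ K.mulVec V) := by
  have h1 : W ⬝ᵥ M.mulVec V = V ⬝ᵥ M.mulVec W := by
    rw [dot_symm hM, dotProduct_comm]
  have h2 : U ⬝ᵥ Ke.mulVec V = V ⬝ᵥ Ke.mulVec U := by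
    rw [dot_symm hKe, dotProduct_comm]
  have h3 : V ⬝ᵥ M.mulVec W
      = -(α * (V ⬝ᵥ M.mulVec V) + β * (V ⬝ᵥ K.mulVec V) + V ⬝ᵥ Ke.mulVec U) := by
    rw [heq]
    simp [dotProduct_neg, dotProduct_add, dotProduct_smul]
  rw [h1, h2, h3]
  ring

lemma dval_V {n : ℕ} {M K Ke : Matrix (Fin n) (Fin n) ℝ} (hM : M.IsHermitian)
    (hK : K.IsHermitian) (hKe : Ke.IsHermitian) {α β : ℝ} {U V W : Fin n → ℝ}
    (heq : M.mulVec W = -(α • M.mulVec V + β • K.mulVec V + Ke.mulVec U)) :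
    ((W ⬝ᵥ M.mulVec V + V ⬝ᵥ M.mulVec W) + (V ⬝ᵥ Ke.mulVec U + U ⬝ᵥ Ke.mulVec V))
      + α * (W ⬝ᵥ M.mulVec U + V ⬝ᵥ M.mulVec V)
      + (α^2/2) * (V ⬝ᵥ M.mulVec U + U ⬝ᵥ M.mulVec V)
      + (α*β/2) * (V ⬝ᵥ K.mulVec U + U ⬝ᵥ K.mulVec V)
      = -α*((V ⬝ᵥ M.mulVec V) + (U ⬝ᵥ Ke.mulVec U)) - 2*β*(V ⬝ᵥ K.mulVec V) := by
  have hE := dval_E hM hKe heq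
  have h1 : W ⬝ᵥ M.mulVec U = U ⬝ᵥ M.mulVec W := by
    rw [dot_symm hM, dotProduct_comm]
  have h4 : U ⬝ᵥ M.mulVec W
      = -(α * (U ⬝ᵥ M.mulVec V) + β * (U ⬝ᵥ K.mulVec V) + U ⬝ᵥ Ke.mulVec U) := by
    rw [heq]
    simp [dotProduct_neg, dotProduct_add, dotProduct_smul]
  have h5 : V ⬝ᵥ M.mulVec U = U ⬝ᵥ M.mulVec V := by
    rw [dot_symm hM, dotProduct_comm]
  have h6 : V ⬝ᵥ K.mulVec U = U ⬝ᵥ K.mulVec V := by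
    rw [dot_symm hK, dotProduct_comm]
  rw [hE, h1, h4, h5, h6]
  ring

open scoped MatrixOrder in
noncomputable def msqrt {m : ℕ} (M : Matrix (Fin m) (Fin m) ℝ) : Matrix (Fin m) (Fin m) ℝ := CFC.sqrt M

open scoped MatrixOrder in
lemma msqrt_psd {m : ℕ} (M : Matrix (Fin m) (Fin m) ℝ) : (msqrt M).PosSemidef :=
  (CFC.sqrt_nonneg M).posSemidef

open scoped MatrixOrder in
lemma msqrt_mul_self {m : ℕ} {M : Matrix (Fin m) (Fin m) ℝ} (hM : M.PosSemidef) :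
    msqrt M * msqrt M = M :=
  CFC.sqrt_mul_sqrt_self M hM.nonneg

end PiezoAux

/-- The pair `(u, φ)` (with first and second derivatives `u'`, `u''` of `u`) solves the
discretized (Galerkin) piezoelectric system with mass matrix `M`, stiffness matrix `K`,
dielectric matrix `A`, piezoelectric coupling matrix `C`, Rayleigh damping parameters
`α, β` and forcing terms `f, g` on the time set `I`. -/
def PiezoSolves {n k : ℕ} (M K : Matrix (Fin n) (Fin n) ℝ)
    (A : Matrix (Fin k) (Fin k) ℝ) (C : Matrix (Fin n) (Fin k) ℝ)
    (α β : ℝ) (f : ℝ → Fin n → ℝ) (g : ℝ → Fin k → ℝ)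
    (u u' u'' : ℝ → Fin n → ℝ) (φ : ℝ → Fin k → ℝ) (I : Set ℝ) : Prop :=
  (∀ t ∈ I, HasDerivAt u (u' t) t) ∧
  (∀ t ∈ I, HasDerivAt u' (u'' t) t) ∧
  (∀ t ∈ I,
    M.mulVec (u'' t) + α • M.mulVec (u' t) + K.mulVec (u t)
      + β • K.mulVec (u' t) + C.mulVec (φ t) = f t) ∧
  (∀ t ∈ I, Cᵀ.mulVec (u t) - A.mulVec (φ t) = g t)

open PiezoAux in
/-- Long-term behavior Corollary at the Galerkin level: with strictly positive damping
and vanishing excitation after time `t₀`, the velocity, the elastic strain energy and the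
electric potential tend to zero, and the total energy converges to some `c ≥ 0`. -/
theorem piezo_discrete_long_term_behavior {n k : ℕ}
    (M K : Matrix (Fin n) (Fin n) ℝ) (A : Matrix (Fin k) (Fin k) ℝ)
    (C : Matrix (Fin n) (Fin k) ℝ) (α β : ℝ)
    (hM : M.PosDef) (hK : K.PosSemidef) (hA : A.PosDef)
    (hα : 0 < α) (hβ : 0 < β)
    (t₀ : ℝ) (ht₀ : 0 ≤ t₀)
    (f : ℝ → Fin n → ℝ) (hf : Continuous f)
    (g g' : ℝ → Fin k → ℝ) (hg : ∀ t, HasDerivAt g (g' t) t) (hg' : Continuous g')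
    (hf0 : ∀ t ≥ t₀, f t = 0) (hg0 : ∀ t ≥ t₀, g t = 0)
    (u u' u'' : ℝ → Fin n → ℝ) (φ φ' : ℝ → Fin k → ℝ)
    (hsol : PiezoSolves M K A C α β f g u u' u'' φ (Ici 0))
    (hu'' : ContinuousOn u'' (Ici 0))
    (hφ : ∀ t ∈ Ici (0 : ℝ), HasDerivAt φ (φ' t) t)
    (hφ' : ContinuousOn φ' (Ici 0)) :
    Tendsto u' atTop (nhds 0) ∧
    Tendsto (fun t => K.mulVec (u t) ⬝ᵥ u t) atTop (nhds 0) ∧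
    Tendsto φ atTop (nhds 0) ∧
    ∃ c : ℝ, 0 ≤ c ∧
      Tendsto (fun t => u' t ⬝ᵥ u' t + u t ⬝ᵥ u t + φ t ⬝ᵥ φ t) atTop (nhds c) := by
  obtain ⟨hu1, hu2, hu3, hu4⟩ := hsol
  have hIci : ∀ t : ℝ, t ∈ Ici t₀ → t ∈ Ici (0:ℝ) := fun t ht => le_trans ht₀ ht
  -- A is invertible, A⁻¹ pos def
  have hAdet : IsUnit A.det := isUnit_iff_ne_zero.2 hA.det_pos.ne'
  have hAinv : A⁻¹.PosDef := hA.inv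
  -- electric potential in terms of u after t₀
  have hφeq : ∀ t ∈ Ici t₀, φ t = A⁻¹.mulVec (Cᵀ.mulVec (u t)) := by
    intro t ht
    have h4 := hu4 t (hIci t ht)
    rw [hg0 t ht] at h4
    have h5 : Cᵀ.mulVec (u t) = A.mulVec (φ t) := sub_eq_zero.1 h4
    rw [h5, Matrix.mulVec_mulVec, Matrix.nonsing_inv_mul _ hAdet, Matrix.one_mulVec]
  -- effective stiffness matrix
  set Ke : Matrix (Fin n) (Fin n) ℝ := K + C * A⁻¹ * Cᵀ with hKedef
  have hCsd : (C * A⁻¹ * Cᵀ).PosSemidef := by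
    have h := hAinv.posSemidef.mul_mul_conjTranspose_same C
    rwa [Matrix.conjTranspose_eq_transpose_of_trivial] at h
  have hKe : Ke.PosSemidef := hK.add hCsd
  -- homogeneous second-order equation for t ≥ t₀
  have heq : ∀ t ∈ Ici t₀, M.mulVec (u'' t)
      = -(α • M.mulVec (u' t) + β • K.mulVec (u' t) + Ke.mulVec (u t)) := by
    intro t ht
    have h0 := hu3 t (hIci t ht)
    rw [hf0 t ht, hφeq t ht, Matrix.mulVec_mulVec, Matrix.mulVec_mulVec] at h0
    rw [eq_neg_iff_add_eq_zero, hKedef, Matrix.add_mulVec]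
    rw [← h0]
    abel
  -- nonnegativity of the basic quadratic quantities
  have hannR : ∀ t, 0 ≤ u' t ⬝ᵥ M.mulVec (u' t) := fun t => psd_nonneg hM.posSemidef _
  have hbnnR : ∀ t, 0 ≤ u t ⬝ᵥ Ke.mulVec (u t) := fun t => psd_nonneg hKe _
  -- energy and Lyapunov functions
  set En : ℝ → ℝ := fun t => u' t ⬝ᵥ M.mulVec (u' t) + u t ⬝ᵥ Ke.mulVec (u t) with hEndef
  set Vf : ℝ → ℝ := fun t => En t + α * (u' t ⬝ᵥ M.mulVec (u t))
      + (α^2/2) * (u t ⬝ᵥ M.mulVec (u t)) + (α*β/2) * (u t ⬝ᵥ K.mulVec (u t)) with hVfdef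
  -- derivative of energy
  have hEd : ∀ t ∈ Ici t₀, HasDerivAt En
      (-2*α*(u' t ⬝ᵥ M.mulVec (u' t)) - 2*β*(u' t ⬝ᵥ K.mulVec (u' t))) t := by
    intro t ht
    have hraw : HasDerivAt En
        ((u'' t ⬝ᵥ M.mulVec (u' t) + u' t ⬝ᵥ M.mulVec (u'' t))
          + (u' t ⬝ᵥ Ke.mulVec (u t) + u t ⬝ᵥ Ke.mulVec (u' t))) t := by
      exact (hasDerivAt_dot (hu2 t (hIci t ht))
          (hasDerivAt_mulVecFun M (hu2 t (hIci t ht)))).add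
        (hasDerivAt_dot (hu1 t (hIci t ht))
          (hasDerivAt_mulVecFun Ke (hu1 t (hIci t ht))))
    have hval := dval_E hM.1 hKe.1 (heq t ht)
    rw [← hval]
    exact hraw
  -- derivative of the Lyapunov function
  have hVd : ∀ t ∈ Ici t₀, HasDerivAt Vf
      (-α * En t - 2*β*(u' t ⬝ᵥ K.mulVec (u' t))) t := by
    intro t ht
    have hraw : HasDerivAt Vf
        ((((u'' t ⬝ᵥ M.mulVec (u' t) + u' t ⬝ᵥ M.mulVec (u'' t))
          + (u' t ⬝ᵥ Ke.mulVec (u t) + u t ⬝ᵥ Ke.mulVec (u' t)))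
          + α * (u'' t ⬝ᵥ M.mulVec (u t) + u' t ⬝ᵥ M.mulVec (u' t))
          + (α^2/2) * (u' t ⬝ᵥ M.mulVec (u t) + u t ⬝ᵥ M.mulVec (u' t))
          + (α*β/2) * (u' t ⬝ᵥ K.mulVec (u t) + u t ⬝ᵥ K.mulVec (u' t)))) t := by
      exact ((((hasDerivAt_dot (hu2 t (hIci t ht))
            (hasDerivAt_mulVecFun M (hu2 t (hIci t ht)))).add
          (hasDerivAt_dot (hu1 t (hIci t ht))
            (hasDerivAt_mulVecFun Ke (hu1 t (hIci t ht))))).add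
          ((hasDerivAt_dot (hu2 t (hIci t ht))
            (hasDerivAt_mulVecFun M (hu1 t (hIci t ht)))).const_mul α)).add
          (((hasDerivAt_dot (hu1 t (hIci t ht))
            (hasDerivAt_mulVecFun M (hu1 t (hIci t ht)))).const_mul (α^2/2)))).add
          (((hasDerivAt_dot (hu1 t (hIci t ht))
            (hasDerivAt_mulVecFun K (hu1 t (hIci t ht)))).const_mul (α*β/2)))
    have hval := dval_V hM.1 hK.1 hKe.1 (heq t ht)
    rw [hEndef]
    rw [← hval]
    exact hraw
  -- E is nonneg
  have hEnn : ∀ t, 0 ≤ En t := fun t => add_nonneg (hannR t) (hbnnR t)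
  -- V is nonneg
  have hVnn : ∀ t, 0 ≤ Vf t := by
    intro t
    have hw := psd_nonneg hM.posSemidef (u' t + (α/2) • u t)
    simp only [Matrix.mulVec_add, Matrix.mulVec_smul, dotProduct_add,
      add_dotProduct, smul_dotProduct, dotProduct_smul,
      smul_eq_mul] at hw
    have hsym : u t ⬝ᵥ M.mulVec (u' t) = u' t ⬝ᵥ M.mulVec (u t) := by
      rw [dot_symm hM.1, dotProduct_comm]
    rw [hsym] at hw
    have h1 := hbnnR t
    have h2 := psd_nonneg hM.posSemidef (u t)
    have h3 := psd_nonneg hK (u t)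
    rw [hVfdef, hEndef]
    simp only
    nlinarith [hw, h1, h2, h3, sq_nonneg α, mul_pos hα hβ]
  -- E is antitone on [t₀, ∞)
  have hEant : AntitoneOn En (Ici t₀) := by
    apply antitoneOn_of_hasDerivAt' hEd
    intro t ht
    have h1 := hannR t
    have h2 := psd_nonneg hK (u' t)
    nlinarith
  obtain ⟨L, hL0, hLle, hLt⟩ := tendsto_of_antitoneOn hEant (fun t _ => hEnn t)
  -- the limit of the energy is 0
  have hLzero : L = 0 := by
    by_contra hne
    have hLpos : 0 < L := lt_of_le_of_ne hL0 (Ne.symm hne)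
    have hV2 : AntitoneOn (fun t => Vf t + (α*L)*t) (Ici t₀) := by
      apply antitoneOn_of_hasDerivAt'
        (f' := fun t => (-α * En t - 2*β*(u' t ⬝ᵥ K.mulVec (u' t))) + (α*L))
      · intro t ht
        have hid : HasDerivAt (fun s : ℝ => (α*L)*s) (α*L) t := by
          simpa using (hasDerivAt_id t).const_mul (α*L)
        exact (hVd t ht).add hid
      · intro t ht
        have h1 := hLle t ht
        have h2 := psd_nonneg hK (u' t)
        nlinarith
    have hkey : ∀ T ∈ Ici t₀, (α*L)*T ≤ Vf t₀ + (α*L)*t₀ := by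
      intro T hT
      have h := hV2 self_mem_Ici hT hT
      simp only at h
      have h2 := hVnn T
      linarith
    have hαL : 0 < α * L := mul_pos hα hLpos
    set T := max t₀ ((Vf t₀ + (α*L)*t₀)/(α*L) + 1) with hT
    have hT1 : t₀ ≤ T := le_max_left _ _
    have hT2 : (Vf t₀ + (α*L)*t₀)/(α*L) + 1 ≤ T := le_max_right _ _
    have h3 := hkey T hT1
    rw [div_add' _ _ _ hαL.ne', div_le_iff₀ hαL] at hT2
    nlinarith
  rw [hLzero] at hLt hLle
  -- convergence of the two energy components
  have ha0 : Tendsto (fun t => u' t ⬝ᵥ M.mulVec (u' t)) atTop (nhds 0) :=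
    squeeze_zero hannR (fun t => le_add_of_nonneg_right (hbnnR t)) hLt
  have hb0 : Tendsto (fun t => u t ⬝ᵥ Ke.mulVec (u t)) atTop (nhds 0) :=
    squeeze_zero hbnnR (fun t => le_add_of_nonneg_left (hannR t)) hLt
  -- goal 1 : u' → 0
  obtain ⟨cM, hcM, hcMle⟩ := posdef_coercive hM
  have hud0 : Tendsto (fun t => u' t ⬝ᵥ u' t) atTop (nhds 0) := by
    apply squeeze_zero (fun t => dot_self_nonneg' (u' t))
      (fun t => ?_) (by simpa using ha0.div_const cM)
    rw [le_div_iff₀ hcM]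
    calc u' t ⬝ᵥ u' t * cM = cM * (u' t ⬝ᵥ u' t) := by ring
      _ ≤ u' t ⬝ᵥ M.mulVec (u' t) := hcMle (u' t)
  have goal1 : Tendsto u' atTop (nhds 0) := tendsto_zero_of_dot_self hud0
  -- splitting of b
  have hbsplit : ∀ t, u t ⬝ᵥ Ke.mulVec (u t)
      = u t ⬝ᵥ K.mulVec (u t) + u t ⬝ᵥ (C * A⁻¹ * Cᵀ).mulVec (u t) := by
    intro t
    rw [hKedef, Matrix.add_mulVec, dotProduct_add]
  have hKu0 : Tendsto (fun t => u t ⬝ᵥ K.mulVec (u t)) atTop (nhds 0) := by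
    apply squeeze_zero (fun t => psd_nonneg hK (u t)) (fun t => ?_) hb0
    rw [hbsplit t]
    exact le_add_of_nonneg_right (psd_nonneg hCsd (u t))
  have goal2 : Tendsto (fun t => K.mulVec (u t) ⬝ᵥ u t) atTop (nhds 0) := by
    apply hKu0.congr
    intro t
    rw [dotProduct_comm]
  -- goal 3 : φ → 0
  have hqq : ∀ t, u t ⬝ᵥ (C * A⁻¹ * Cᵀ).mulVec (u t)
      = (Cᵀ.mulVec (u t)) ⬝ᵥ A⁻¹.mulVec (Cᵀ.mulVec (u t)) := by
    intro t
    rw [← Matrix.mulVec_mulVec, ← Matrix.mulVec_mulVec]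
    rw [Matrix.dotProduct_mulVec (u t) C, ← Matrix.mulVec_transpose]
  have hCu0 : Tendsto (fun t => (Cᵀ.mulVec (u t)) ⬝ᵥ A⁻¹.mulVec (Cᵀ.mulVec (u t)))
      atTop (nhds 0) := by
    apply squeeze_zero (fun t => psd_nonneg hAinv.posSemidef _) (fun t => ?_) hb0
    rw [hbsplit t, ← hqq t]
    exact le_add_of_nonneg_left (psd_nonneg hK (u t))
  obtain ⟨cA, hcA, hcAle⟩ := posdef_coercive hAinv
  have hCud : Tendsto (fun t => Cᵀ.mulVec (u t) ⬝ᵥ Cᵀ.mulVec (u t)) atTop (nhds 0) := by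
    apply squeeze_zero (fun t => dot_self_nonneg' _) (fun t => ?_) (by simpa using hCu0.div_const cA)
    rw [le_div_iff₀ hcA]
    calc Cᵀ.mulVec (u t) ⬝ᵥ Cᵀ.mulVec (u t) * cA
        = cA * (Cᵀ.mulVec (u t) ⬝ᵥ Cᵀ.mulVec (u t)) := by ring
      _ ≤ Cᵀ.mulVec (u t) ⬝ᵥ A⁻¹.mulVec (Cᵀ.mulVec (u t)) := hcAle _
      _ = Cᵀ.mulVec (u t) ⬝ᵥ (A⁻¹ * Cᵀ).mulVec (u t) := by rw [Matrix.mulVec_mulVec]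
  have hCuz : Tendsto (fun t => Cᵀ.mulVec (u t)) atTop (nhds 0) :=
    tendsto_zero_of_dot_self hCud
  have goal3 : Tendsto φ atTop (nhds 0) := by
    have h1 : Tendsto (fun t => A⁻¹.mulVec (Cᵀ.mulVec (u t))) atTop (nhds 0) := by
      have h2 := tendsto_mulVecFun A⁻¹ hCuz
      simpa [Matrix.mulVec_zero] using h2
    apply h1.congr'
    filter_upwards [eventually_ge_atTop t₀] with t ht
    exact (hφeq t ht).symm
  -- goal 4 : convergence of u via spectral decomposition
  -- square root of M
  set R : Matrix (Fin n) (Fin n) ℝ := msqrt M with hRdef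
  have hRpsd : R.PosSemidef := msqrt_psd M
  have hRR : R * R = M := msqrt_mul_self hM.posSemidef
  have hRdet : IsUnit R.det := by
    have h1 : R.det * R.det = M.det := by rw [← Matrix.det_mul, hRR]
    have h2 : M.det ≠ 0 := hM.det_pos.ne'
    rw [isUnit_iff_ne_zero]
    intro h
    rw [h, mul_zero] at h1
    exact h2 h1.symm
  set S : Matrix (Fin n) (Fin n) ℝ := R⁻¹ with hSdef
  have hSR : S * R = 1 := Matrix.nonsing_inv_mul R hRdet
  have hRS : R * S = 1 := Matrix.mul_nonsing_inv R hRdet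
  have hSherm : S.IsHermitian := hRpsd.1.inv
  have hSM : S * M = R := by rw [← hRR, ← mul_assoc, hSR, one_mul]
  set K1 : Matrix (Fin n) (Fin n) ℝ := S * K * S with hK1def
  set K2 : Matrix (Fin n) (Fin n) ℝ := S * Ke * S with hK2def
  have hK1psd : K1.PosSemidef := by
    have h := hK.mul_mul_conjTranspose_same S
    rwa [hSherm.eq] at h
  have hK2psd : K2.PosSemidef := by
    have h := hKe.mul_mul_conjTranspose_same S
    rwa [hSherm.eq] at h
  have hK1h : K1.IsHermitian := hK1psd.1
  have hK2h : K2.IsHermitian := hK2psd.1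
  -- eigenbasis of K2
  set d : Fin n → ℝ := hK2h.eigenvalues with hddef
  set v : Fin n → Fin n → ℝ := fun i => ⇑(hK2h.eigenvectorBasis i) with hvdef
  have hKv : ∀ i, K2.mulVec (v i) = d i • v i := fun i => hK2h.mulVec_eigenvectorBasis i
  have hd0 : ∀ i, 0 ≤ d i := fun i => hK2psd.eigenvalues_nonneg i
  have hvv : ∀ i j, v i ⬝ᵥ v j = if i = j then 1 else 0 := fun i j => eigen_orthonormal hK2h i j
  -- products with R and S
  have hK1R : K1 * R = S * K := by rw [hK1def, mul_assoc (S * K) S R, hSR, mul_one]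
  have hK2R : K2 * R = S * Ke := by rw [hK2def, mul_assoc (S * Ke) S R, hSR, mul_one]
  have hSRu : ∀ x : Fin n → ℝ, S.mulVec (R.mulVec x) = x := by
    intro x
    rw [Matrix.mulVec_mulVec, hSR, Matrix.one_mulVec]
  have hSKu : ∀ x : Fin n → ℝ, S.mulVec (K.mulVec x) = K1.mulVec (R.mulVec x) := by
    intro x
    rw [Matrix.mulVec_mulVec, Matrix.mulVec_mulVec, hK1R]
  have hSKeu : ∀ x : Fin n → ℝ, S.mulVec (Ke.mulVec x) = K2.mulVec (R.mulVec x) := by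
    intro x
    rw [Matrix.mulVec_mulVec, Matrix.mulVec_mulVec, hK2R]
  have hK2quad : ∀ x : Fin n → ℝ,
      x ⬝ᵥ K2.mulVec x = (S.mulVec x) ⬝ᵥ Ke.mulVec (S.mulVec x) := by
    intro x
    have h1 : K2.mulVec x = S.mulVec (Ke.mulVec (S.mulVec x)) := by
      rw [Matrix.mulVec_mulVec, Matrix.mulVec_mulVec, hK2def]
    rw [h1, dot_symm hSherm]
  have hbK2 : ∀ t, u t ⬝ᵥ Ke.mulVec (u t)
      = (R.mulVec (u t)) ⬝ᵥ K2.mulVec (R.mulVec (u t)) := by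
    intro t
    rw [hK2quad, hSRu]
  -- the transformed equation
  have hyeq : ∀ t ∈ Ici t₀, R.mulVec (u'' t)
      = -(α • R.mulVec (u' t) + β • K1.mulVec (R.mulVec (u' t))
          + K2.mulVec (R.mulVec (u t))) := by
    intro t ht
    calc R.mulVec (u'' t)
        = S.mulVec (M.mulVec (u'' t)) := by rw [Matrix.mulVec_mulVec, hSM]
      _ = S.mulVec (-(α • M.mulVec (u' t) + β • K.mulVec (u' t) + Ke.mulVec (u t))) := by
          rw [heq t ht]
      _ = -(α • S.mulVec (M.mulVec (u' t)) + β • S.mulVec (K.mulVec (u' t))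
            + S.mulVec (Ke.mulVec (u t))) := by
          rw [Matrix.mulVec_neg, Matrix.mulVec_add, Matrix.mulVec_add,
            Matrix.mulVec_smul, Matrix.mulVec_smul]
      _ = -(α • R.mulVec (u' t) + β • K1.mulVec (R.mulVec (u' t))
            + K2.mulVec (R.mulVec (u t))) := by
          rw [hSKu, hSKeu, Matrix.mulVec_mulVec, hSM]
  -- velocity in transformed coordinates tends to zero
  have hRu'0 : Tendsto (fun t => R.mulVec (u' t)) atTop (nhds 0) := by
    have h := tendsto_mulVecFun R goal1
    simpa [Matrix.mulVec_zero] using h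
  -- each eigen-coordinate converges
  have hzc : ∀ i : Fin n, ∃ ci : ℝ,
      Tendsto (fun t => v i ⬝ᵥ R.mulVec (u t)) atTop (nhds ci) := by
    intro i
    have hvyd0 : Tendsto (fun t => v i ⬝ᵥ R.mulVec (u' t)) atTop (nhds 0) := by
      have h := tendsto_dot (tendsto_const_nhds (x := v i)) hRu'0
      simpa [dotProduct_zero] using h
    rcases eq_or_lt_of_le (hd0 i) with hdi | hdi
    · -- kernel mode
      have hK2v : K2.mulVec (v i) = 0 := by rw [hKv i, ← hdi, zero_smul]
      have hvK2 : ∀ x, v i ⬝ᵥ K2.mulVec x = 0 := by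
        intro x
        rw [dot_symm hK2h, hK2v, zero_dotProduct]
      have hq0 : (S.mulVec (v i)) ⬝ᵥ Ke.mulVec (S.mulVec (v i)) = 0 := by
        rw [← hK2quad]
        exact hvK2 (v i)
      have hKw : K.mulVec (S.mulVec (v i)) = 0 := by
        apply psd_quad_zero hK
        have h1 := psd_nonneg hK (S.mulVec (v i))
        have h2 := psd_nonneg hCsd (S.mulVec (v i))
        rw [hKedef, Matrix.add_mulVec, dotProduct_add] at hq0
        linarith
      have hK1v : K1.mulVec (v i) = 0 := by
        have h1 : K1.mulVec (v i) = S.mulVec (K.mulVec (S.mulVec (v i))) := by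
          rw [Matrix.mulVec_mulVec, Matrix.mulVec_mulVec, hK1def]
        rw [h1, hKw, Matrix.mulVec_zero]
      have hvK1 : ∀ x, v i ⬝ᵥ K1.mulVec x = 0 := by
        intro x
        rw [dot_symm hK1h, hK1v, zero_dotProduct]
      -- the function z + z'/α is constant on [t₀, ∞)
      have hzder : ∀ t ∈ Ici t₀, HasDerivAt
          (fun s => v i ⬝ᵥ R.mulVec (u s) + (v i ⬝ᵥ R.mulVec (u' s)) / α)
          ((0 ⬝ᵥ R.mulVec (u t) + v i ⬝ᵥ R.mulVec (u' t))
            + (0 ⬝ᵥ R.mulVec (u' t) + v i ⬝ᵥ R.mulVec (u'' t)) / α) t := by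
        intro t ht
        exact (hasDerivAt_dot (hasDerivAt_const t (v i))
            (hasDerivAt_mulVecFun R (hu1 t (hIci t ht)))).add
          ((hasDerivAt_dot (hasDerivAt_const t (v i))
            (hasDerivAt_mulVecFun R (hu2 t (hIci t ht)))).div_const α)
      have hzval : ∀ t ∈ Ici t₀,
          (0 ⬝ᵥ R.mulVec (u t) + v i ⬝ᵥ R.mulVec (u' t))
            + (0 ⬝ᵥ R.mulVec (u' t) + v i ⬝ᵥ R.mulVec (u'' t)) / α = 0 := by
        intro t ht
        have hval : v i ⬝ᵥ R.mulVec (u'' t) = -(α * (v i ⬝ᵥ R.mulVec (u' t))) := by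
          rw [hyeq t ht, dotProduct_neg, dotProduct_add,
            dotProduct_add, dotProduct_smul, dotProduct_smul,
            hvK1 (R.mulVec (u' t)), hvK2 (R.mulVec (u t))]
          simp
        rw [hval, zero_dotProduct, zero_dotProduct]
        field_simp
        ring
      have hconst := constOn_of_hasDerivAt_zero
        (f' := fun _ => (0:ℝ))
        (fun t ht => by
          have h6 := hzder t ht
          rw [hzval t ht] at h6
          exact h6)
        (fun t ht => rfl)
      refine ⟨v i ⬝ᵥ R.mulVec (u t₀) + (v i ⬝ᵥ R.mulVec (u' t₀)) / α, ?_⟩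
      have h2 : Tendsto (fun t => (v i ⬝ᵥ R.mulVec (u t₀) + (v i ⬝ᵥ R.mulVec (u' t₀)) / α)
          - (v i ⬝ᵥ R.mulVec (u' t)) / α) atTop
          (nhds (v i ⬝ᵥ R.mulVec (u t₀) + (v i ⬝ᵥ R.mulVec (u' t₀)) / α)) := by
        have h3 := tendsto_const_nhds
          (x := v i ⬝ᵥ R.mulVec (u t₀) + (v i ⬝ᵥ R.mulVec (u' t₀)) / α)
          (f := atTop (α := ℝ))
        have h4 := h3.sub (hvyd0.div_const α)
        simpa using h4
      apply h2.congr'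
      filter_upwards [eventually_ge_atTop t₀] with t ht
      have h5 := hconst t ht
      linarith
    · -- positive mode
      refine ⟨0, ?_⟩
      have hbb : ∀ t, d i * (v i ⬝ᵥ R.mulVec (u t)) ^ 2 ≤ u t ⬝ᵥ Ke.mulVec (u t) := by
        intro t
        set zt : ℝ := v i ⬝ᵥ R.mulVec (u t) with hzt
        set r : Fin n → ℝ := R.mulVec (u t) - zt • v i with hrdef
        have hvi1 : v i ⬝ᵥ v i = 1 := by rw [hvv i i, if_pos rfl]
        have hvr : v i ⬝ᵥ r = 0 := by
          rw [hrdef, dotProduct_sub, dotProduct_smul, smul_eq_mul, hvi1]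
          simp [hzt]
        have hrv : r ⬝ᵥ v i = 0 := by rw [dotProduct_comm]; exact hvr
        have hvK2r : v i ⬝ᵥ K2.mulVec r = 0 := by
          rw [dot_symm hK2h, hKv i, smul_dotProduct, smul_eq_mul, hvr, mul_zero]
        have hsplit : R.mulVec (u t) = zt • v i + r := by rw [hrdef]; abel
        have hexp : (R.mulVec (u t)) ⬝ᵥ K2.mulVec (R.mulVec (u t))
            = d i * zt ^ 2 + r ⬝ᵥ K2.mulVec r := by
          conv_lhs => rw [hsplit]
          rw [Matrix.mulVec_add, Matrix.mulVec_smul, hKv i]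
          rw [dotProduct_add, add_dotProduct, add_dotProduct]
          rw [smul_dotProduct, smul_dotProduct, dotProduct_smul,
            dotProduct_smul, dotProduct_smul]
          rw [hvi1]
          rw [dotProduct_smul, hrv]
          rw [hvK2r]
          simp only [smul_eq_mul]
          ring
        have hrK2r := psd_nonneg hK2psd r
        rw [hbK2 t, hexp]
        linarith
      have hsq : Tendsto (fun t => (v i ⬝ᵥ R.mulVec (u t)) ^ 2) atTop (nhds 0) := by
        apply squeeze_zero (fun t => sq_nonneg _) (fun t => ?_)
          (by simpa using hb0.div_const (d i))
        rw [le_div_iff₀ hdi]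
        calc (v i ⬝ᵥ R.mulVec (u t)) ^ 2 * d i
            = d i * (v i ⬝ᵥ R.mulVec (u t)) ^ 2 := by ring
          _ ≤ u t ⬝ᵥ Ke.mulVec (u t) := hbb t
      exact tendsto_sq_zero hsq
  choose c hc using hzc
  -- u converges
  have hysum : ∀ t, R.mulVec (u t) = ∑ i, (v i ⬝ᵥ R.mulVec (u t)) • v i := by
    intro t
    exact eigen_expansion hK2h (R.mulVec (u t))
  have hytend : Tendsto (fun t => R.mulVec (u t)) atTop (nhds (∑ i, c i • v i)) := by
    have h := tendsto_finset_sum (Finset.univ : Finset (Fin n))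
      (fun i _ => (hc i).smul_const (v i))
    exact h.congr fun t => (hysum t).symm
  have hutend : Tendsto u atTop (nhds (S.mulVec (∑ i, c i • v i))) := by
    have h := tendsto_mulVecFun S hytend
    exact h.congr fun t => hSRu (u t)
  have hdotu : Tendsto (fun t => u t ⬝ᵥ u t) atTop
      (nhds ((S.mulVec (∑ i, c i • v i)) ⬝ᵥ (S.mulVec (∑ i, c i • v i)))) :=
    tendsto_dot hutend hutend
  have hφφ : Tendsto (fun t => φ t ⬝ᵥ φ t) atTop (nhds 0) := by
    have h := tendsto_dot goal3 goal3
    simpa [dotProduct_zero] using h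
  refine ⟨goal1, goal2, goal3,
    (S.mulVec (∑ i, c i • v i)) ⬝ᵥ (S.mulVec (∑ i, c i • v i)),
    dot_self_nonneg' _, ?_⟩
  have hfinal := (hud0.add hdotu).add hφφ
  simpa using hfinal
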